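/- (Shift coupling of Laplace distributions.) Let k, k', v₁, v₂ ∈ ℤ with |k + v₁ − v₂| ≤ k' and ε > 0. Then there is a (k'·ε, 0)-approximate lifting of the relation {(x₁,x₂) ∈ ℤ×ℤ : x₁ + k = x₂} relating Lap_ε(v₁) and Lap_ε(v₂). -/

import Mathlib

open scoped ENNReal

noncomputable section

/-- A discrete sub-distribution: total mass at most 1. -/
def IsSubDist {A : Type*} (μ : A → ℝ≥0∞) : Prop := ∑' a, μ a ≤ 1

/-- Mass of a set under `μ`. -/
def setSum {A : Type*} (μ : A → ℝ≥0∞) (S : Set A) : ℝ≥0∞ := ∑' a : S, μ (a : A)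

/-- `μ` is a coupling of `(μ₁, μ₂)`: a joint sub-distribution with the given marginals. -/
def IsCoupling {A₁ A₂ : Type*} (μ : A₁ × A₂ → ℝ≥0∞)
    (μ₁ : A₁ → ℝ≥0∞) (μ₂ : A₂ → ℝ≥0∞) : Prop :=
  IsSubDist μ ∧ (∀ a₁, ∑' a₂, μ (a₁, a₂) = μ₁ a₁) ∧ (∀ a₂, ∑' a₁, μ (a₁, a₂) = μ₂ a₂)

/-- Image of a set under a relation. -/
def relImage {A₁ A₂ : Type*} (R : Set (A₁ × A₂)) (S : Set A₁) : Set A₂ :=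
  {a₂ | ∃ a₁ ∈ S, (a₁, a₂) ∈ R}

/-- `R⋆ = R ∪ (A₁ × {⋆}) ∪ ({⋆} × A₂)`, with `⋆` modelled by `none`. -/
def starRel {A₁ A₂ : Type*} (R : Set (A₁ × A₂)) : Set (Option A₁ × Option A₂) :=
  {p | match p with
       | (some a₁, some a₂) => (a₁, a₂) ∈ R
       | (some _, none) => True
       | (none, some _) => True
       | (none, none) => False}

/-- `(ε, δ)`-approximate `R`-lifting of `(μ₁, μ₂)`, witnessed by two
sub-distributions over `A₁⋆ × A₂⋆` with marginal, support, and ε-distance conditions. -/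
def ApproxLift {A₁ A₂ : Type*} (ε δ : ℝ) (R : Set (A₁ × A₂))
    (μ₁ : A₁ → ℝ≥0∞) (μ₂ : A₂ → ℝ≥0∞) : Prop :=
  ∃ μL μR : Option A₁ × Option A₂ → ℝ≥0∞,
    IsSubDist μL ∧ IsSubDist μR ∧
    (∀ a₁, ∑' o, μL (some a₁, o) = μ₁ a₁) ∧ (∀ o, μL (none, o) = 0) ∧
    (∀ a₂, ∑' o, μR (o, some a₂) = μ₂ a₂) ∧ (∀ o, μR (o, none) = 0) ∧
    {p | μL p ≠ 0} ⊆ starRel R ∧ {p | μR p ≠ 0} ⊆ starRel R ∧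
    ∀ S : Set (Option A₁ × Option A₂),
      setSum μL S ≤ ENNReal.ofReal (Real.exp ε) * setSum μR S + ENNReal.ofReal δ

/-- The discrete Laplace distribution over `ℤ` with parameter `ε` and mean `t`. -/
def lap (ε : ℝ) (t : ℤ) : ℤ → ℝ≥0∞ := fun v =>
  ENNReal.ofReal
    (Real.exp (-ε * |((v - t : ℤ) : ℝ)|) / ∑' z : ℤ, Real.exp (-ε * |(z : ℝ)|))

lemma exp_abs_summable {ε : ℝ} (hε : 0 < ε) :
    Summable (fun z : ℤ => Real.exp (-ε * |(z : ℝ)|)) := by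
  apply Summable.of_nat_of_neg <;>
  · simp only [Int.cast_natCast, Int.cast_neg, abs_neg, Nat.abs_cast]
    refine (summable_geometric_of_lt_one (le_of_lt (Real.exp_pos _))
      (Real.exp_lt_one_iff.2 (by linarith : -ε < 0))).congr fun n => ?_
    rw [← Real.exp_nat_mul]; ring_nf

lemma W_pos {ε : ℝ} (hε : 0 < ε) :
    0 < ∑' z : ℤ, Real.exp (-ε * |(z : ℝ)|) := by
  have h0 : Real.exp (-ε * |((0 : ℤ) : ℝ)|) ≤ ∑' z : ℤ, Real.exp (-ε * |(z : ℝ)|) :=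
    Summable.le_tsum (exp_abs_summable hε) 0 fun _ _ => (Real.exp_pos _).le
  simp only [Int.cast_zero, abs_zero, mul_zero, Real.exp_zero] at h0
  linarith

lemma lap_total {ε : ℝ} (hε : 0 < ε) (t : ℤ) : ∑' v : ℤ, lap ε t v = 1 := by
  unfold lap
  set W := ∑' z : ℤ, Real.exp (-ε * |(z : ℝ)|) with hW
  have hsum : Summable (fun v : ℤ => Real.exp (-ε * |((v - t : ℤ) : ℝ)|)) := by
    have := ((Equiv.subRight t).summable_iff
      (f := fun z : ℤ => Real.exp (-ε * |(z : ℝ)|))).2 (exp_abs_summable hε)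
    simpa [Function.comp_def, Equiv.subRight_apply] using this
  have htsum : ∑' v : ℤ, Real.exp (-ε * |((v - t : ℤ) : ℝ)|) = W := by
    rw [hW]
    have := (Equiv.subRight t).tsum_eq (fun z : ℤ => Real.exp (-ε * |(z : ℝ)|))
    simpa using this
  rw [← ENNReal.ofReal_tsum_of_nonneg
      (fun v => div_nonneg (Real.exp_pos _).le (W_pos hε).le) (hsum.div_const W)]
  rw [tsum_div_const, htsum, div_self (W_pos hε).ne', ENNReal.ofReal_one]

lemma lap_le_shift {ε : ℝ} (hε : 0 < ε) {k k' v₁ v₂ : ℤ} (h : |k + v₁ - v₂| ≤ k')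
    (x : ℤ) :
    lap ε v₁ x ≤ ENNReal.ofReal (Real.exp ((k' : ℝ) * ε)) * lap ε v₂ (x + k) := by
  unfold lap
  rw [← ENNReal.ofReal_mul (Real.exp_pos _).le]
  apply ENNReal.ofReal_le_ofReal
  rw [← mul_div_assoc, ← Real.exp_add]
  have hWpos := W_pos hε
  have habs : |((x + k - v₂ : ℤ) : ℝ)| ≤ |((x - v₁ : ℤ) : ℝ)| + (k' : ℝ) := by
    have h1 : |x + k - v₂| ≤ |x - v₁| + k' := by
      calc |x + k - v₂| = |(x - v₁) + (k + v₁ - v₂)| := by ring_nf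
        _ ≤ |x - v₁| + |k + v₁ - v₂| := abs_add_le _ _
        _ ≤ |x - v₁| + k' := by linarith
    exact_mod_cast h1
  have hnum : Real.exp (-ε * |((x - v₁ : ℤ) : ℝ)|) ≤
      Real.exp ((k' : ℝ) * ε + -ε * |((x + k - v₂ : ℤ) : ℝ)|) := by
    apply Real.exp_le_exp.2
    nlinarith [mul_le_mul_of_nonneg_left habs hε.le]
  exact div_le_div_of_nonneg_right hnum hWpos.le |>.trans_eq rfl


theorem lap_shift_coupling (ε : ℝ) (hε : 0 < ε) (k k' v₁ v₂ : ℤ)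
    (h : |k + v₁ - v₂| ≤ k') :
    ApproxLift ((k' : ℝ) * ε) 0 {p : ℤ × ℤ | p.1 + k = p.2}
      (lap ε v₁) (lap ε v₂) := by
  classical
  set μL : Option ℤ × Option ℤ → ℝ≥0∞ :=
    fun p => p.1.elim 0 (fun x => if p.2 = some (x + k) then lap ε v₁ x else 0) with hμL
  set μR : Option ℤ × Option ℤ → ℝ≥0∞ :=
    fun p => p.1.elim 0 (fun x => if p.2 = some (x + k) then lap ε v₂ (x + k) else 0) with hμR
  have hL_eq : ∀ (x : ℤ) (o : Option ℤ),
      μL (some x, o) = if o = some (x + k) then lap ε v₁ x else 0 := fun _ _ => rfl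
  have hR_eq : ∀ (x : ℤ) (o : Option ℤ),
      μR (some x, o) = if o = some (x + k) then lap ε v₂ (x + k) else 0 := fun _ _ => rfl
  have hmargL : ∀ a₁ : ℤ, ∑' o, μL (some a₁, o) = lap ε v₁ a₁ := by
    intro a₁
    refine (tsum_eq_single (some (a₁ + k)) fun o ho => by rw [hL_eq, if_neg ho]).trans ?_
    rw [hL_eq, if_pos rfl]
  have hmargR : ∀ a₂ : ℤ, ∑' o, μR (o, some a₂) = lap ε v₂ a₂ := by
    intro a₂
    refine (tsum_eq_single (some (a₂ - k)) fun o ho => ?_).trans ?_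
    · cases o with
      | none => rfl
      | some x =>
        rw [hR_eq, if_neg]
        simp only [Option.some.injEq]
        intro hxy
        exact ho (by simp only [Option.some.injEq]; omega)
    · rw [hR_eq, if_pos (by simp only [Option.some.injEq]; omega)]
      congr 1
      omega
  have hinnerL : ∀ a : Option ℤ, ∑' b, μL (a, b) = a.elim 0 (lap ε v₁) := by
    intro a
    cases a with
    | none => simp only [show ∀ b, μL (none, b) = 0 from fun _ => rfl, tsum_zero]; rfl
    | some x => exact hmargL x
  have hinnerR : ∀ a : Option ℤ, ∑' b, μR (a, b) = a.elim 0 (fun x => lap ε v₂ (x + k)) := by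
    intro a
    cases a with
    | none => simp only [show ∀ b, μR (none, b) = 0 from fun _ => rfl, tsum_zero]; rfl
    | some x =>
      refine (tsum_eq_single (some (x + k)) fun o ho => by rw [hR_eq, if_neg ho]).trans ?_
      rw [hR_eq, if_pos rfl]; rfl
  have hoption : ∀ g : Option ℤ → ℝ≥0∞, g none = 0 → ∑' x : ℤ, g (some x) = ∑' o, g o := by
    intro g hg
    apply Function.Injective.tsum_eq (Option.some_injective ℤ)
    intro o ho
    cases o with
    | none => exact absurd hg ho
    | some x => exact ⟨x, rfl⟩
  have htotL : ∑' p, μL p = 1 := by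
    rw [ENNReal.tsum_prod', tsum_congr hinnerL,
      ← hoption (fun a => a.elim 0 (lap ε v₁)) rfl]
    exact lap_total hε v₁
  have htotR : ∑' p, μR p = 1 := by
    rw [ENNReal.tsum_prod', tsum_congr hinnerR,
      ← hoption (fun a => a.elim 0 (fun x => lap ε v₂ (x + k))) rfl]
    have := (Equiv.addRight k).tsum_eq (lap ε v₂)
    simp only [Equiv.coe_addRight] at this
    exact this.trans (lap_total hε v₂)
  have key : ∀ p, μL p ≤ ENNReal.ofReal (Real.exp ((k' : ℝ) * ε)) * μR p := by
    rintro ⟨a, b⟩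
    cases a with
    | none => exact zero_le
    | some x =>
      by_cases hb : b = some (x + k)
      · rw [hL_eq, hR_eq, if_pos hb, if_pos hb]
        exact lap_le_shift hε h x
      · rw [hL_eq, if_neg hb]
        exact zero_le
  refine ⟨μL, μR, htotL.le, htotR.le, hmargL, fun _ => rfl, hmargR, ?_, ?_, ?_, ?_⟩
  · intro o
    cases o with
    | none => rfl
    | some x => rw [hR_eq, if_neg (by simp)]
  · rintro ⟨a, b⟩ hp
    cases a with
    | none => exact absurd rfl hp
    | some x =>
      cases b with
      | none => exact absurd (by rw [hL_eq, if_neg (by simp)]) hp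
      | some y =>
        have hy : y = x + k := by
          by_contra hy
          exact hp (by rw [hL_eq, if_neg (by simpa using hy)])
        subst hy
        simp only [starRel, Set.mem_setOf_eq]
  · rintro ⟨a, b⟩ hp
    cases a with
    | none => exact absurd rfl hp
    | some x =>
      cases b with
      | none => exact absurd (by rw [hR_eq, if_neg (by simp)]) hp
      | some y =>
        have hy : y = x + k := by
          by_contra hy
          exact hp (by rw [hR_eq, if_neg (by simpa using hy)])
        subst hy
        simp only [starRel, Set.mem_setOf_eq]
  · intro S
    calc setSum μL S ≤ ∑' a : S, ENNReal.ofReal (Real.exp ((k' : ℝ) * ε)) * μR a :=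
          ENNReal.tsum_le_tsum fun a => key a
      _ = ENNReal.ofReal (Real.exp ((k' : ℝ) * ε)) * setSum μR S := ENNReal.tsum_mul_left
      _ ≤ _ + ENNReal.ofReal 0 := le_self_add
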